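/- arXiv:2512.04502 — 4 statements merged into one kernel-verified Lean document; each statement's English description precedes it below -/
import Mathlib

section
/- For every natural number n ≥ 1 and every real number x, the Legendre polynomials satisfy Bonnet's recursion: (n + 1) · P_{n+1}(x) = (2n + 1) · x · P_n(x) − n · P_{n−1}(x). -/
open Real

/-- The Legendre polynomial `P_n`, defined via Rodrigues' formula:
`P_n(x) = 1/(2^n · n!) · dⁿ/dxⁿ (x² − 1)ⁿ`. -/
noncomputable def legendre (n : ℕ) (x : ℝ) : ℝ :=
  (1 / (2 ^ n * n.factorial : ℝ)) * iteratedDeriv n (fun y : ℝ => (y ^ 2 - 1) ^ n) x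

open Polynomial

lemma iteratedDeriv_poly (p : ℝ[X]) (n : ℕ) :
    iteratedDeriv n (fun y : ℝ => p.eval y) = fun y => (derivative^[n] p).eval y := by
  induction n with
  | zero => simp
  | succ k ih =>
    rw [iteratedDeriv_succ, ih, Function.iterate_succ_apply']
    funext y
    exact Polynomial.deriv (𝕜 := ℝ) (p := derivative^[k] p) (x := y)

lemma iterEval (k j : ℕ) (x : ℝ) :
    iteratedDeriv j (fun y : ℝ => (y ^ 2 - 1) ^ k) x =
      (derivative^[j] ((X ^ 2 - 1 : ℝ[X]) ^ k)).eval x := by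
  have h : (fun y : ℝ => (y ^ 2 - 1) ^ k) = fun y => ((X ^ 2 - 1 : ℝ[X]) ^ k).eval y := by
    funext y; simp
  rw [h, iteratedDeriv_poly]

lemma leibniz_X (p : ℝ[X]) (m : ℕ) :
    derivative^[m] (X * p) = X * derivative^[m] p + (m : ℝ[X]) * derivative^[m - 1] p := by
  induction m generalizing p with
  | zero => simp
  | succ k ih =>
    rw [Function.iterate_succ_apply, derivative_mul, derivative_X, one_mul, iterate_map_add, ih]
    cases k with
    | zero => simp [add_comm]
    | succ j =>
      simp only [Nat.add_sub_cancel, ← Function.iterate_succ_apply]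
      push_cast
      ring

lemma deriv_pow_sq (m : ℕ) :
    derivative ((X ^ 2 - 1 : ℝ[X]) ^ (m + 1)) =
      (2 * ((m : ℝ[X]) + 1)) * (X * (X ^ 2 - 1) ^ m) := by
  rw [derivative_pow]
  simp [derivative_sub, derivative_X_pow, map_ofNat]
  ring

lemma cast_eq_C (m : ℕ) : (2 * ((m : ℝ[X]) + 1)) = C ((2 * ((m : ℝ) + 1))) := by
  simp [map_mul, map_add, map_ofNat, Polynomial.C_eq_natCast]

lemma key1 (n : ℕ) :
    derivative^[n + 1] ((X ^ 2 - 1 : ℝ[X]) ^ (n + 1)) =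
      (2 * ((n : ℝ[X]) + 1)) *
        (X * derivative^[n] ((X ^ 2 - 1) ^ n) + (n : ℝ[X]) * derivative^[n - 1] ((X ^ 2 - 1) ^ n)) := by
  rw [Function.iterate_succ_apply, deriv_pow_sq, cast_eq_C, iterate_derivative_C_mul, leibniz_X]

lemma key2 (m : ℕ) :
    X * derivative^[m + 1] ((X ^ 2 - 1 : ℝ[X]) ^ (m + 1)) =
      ((m : ℝ[X]) + 2) * derivative^[m] ((X ^ 2 - 1) ^ (m + 1)) +
        2 * ((m : ℝ[X]) + 1) * derivative^[m] ((X ^ 2 - 1) ^ m) := by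
  set g : ℝ[X] := (X ^ 2 - 1) ^ (m + 1) with hg
  set h : ℝ[X] := (X ^ 2 - 1) ^ m with hh
  have hxdg : X * derivative g = 2 * ((m : ℝ[X]) + 1) * (g + h) := by
    rw [hg, deriv_pow_sq, pow_succ]; ring
  have hA := leibniz_X (derivative g) m
  have hB : derivative^[m] (X * derivative g) =
      2 * ((m : ℝ[X]) + 1) * (derivative^[m] g + derivative^[m] h) := by
    rw [hxdg, cast_eq_C, iterate_derivative_C_mul, iterate_map_add]
  have hC : derivative^[m] (derivative g) = derivative^[m + 1] g :=
    (Function.iterate_succ_apply derivative m g).symm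
  have hD : (m : ℝ[X]) * derivative^[m - 1] (derivative g) = (m : ℝ[X]) * derivative^[m] g := by
    cases m with
    | zero => simp
    | succ j =>
      rw [Nat.add_sub_cancel, ← Function.iterate_succ_apply]
  rw [hC, hD] at hA
  linear_combination hB - hA

/-- Bonnet's recursion for the Legendre polynomials:
`(n + 1) · P_{n+1}(x) = (2n + 1) · x · P_n(x) − n · P_{n−1}(x)` for `n ≥ 1`. -/
theorem legendre_bonnet_recursion (n : ℕ) (hn : 1 ≤ n) (x : ℝ) :
    ((n : ℝ) + 1) * legendre (n + 1) x =
      (2 * (n : ℝ) + 1) * x * legendre n x - (n : ℝ) * legendre (n - 1) x := by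
  obtain ⟨m, rfl⟩ : ∃ m, n = m + 1 := ⟨n - 1, by omega⟩
  have k1 := congrArg (Polynomial.eval x) (key1 (m + 1))
  have k2 := congrArg (Polynomial.eval x) (key2 m)
  simp only [Nat.add_sub_cancel, eval_mul, eval_add, eval_X, eval_natCast, eval_ofNat,
    eval_one] at k1 k2
  simp only [legendre, iterEval, Nat.add_sub_cancel]
  rw [k1]
  set A : ℝ := (derivative^[m + 1] ((X ^ 2 - 1 : ℝ[X]) ^ (m + 1))).eval x
  set B : ℝ := (derivative^[m] ((X ^ 2 - 1 : ℝ[X]) ^ (m + 1))).eval x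
  set C : ℝ := (derivative^[m] ((X ^ 2 - 1 : ℝ[X]) ^ m)).eval x
  push_cast
  have hsub : (2 * ((m:ℝ) + 1) + 1) * x * (1 / (2 ^ (m + 1) * ((m + 1).factorial : ℝ)) * A) =
      (2 * ((m:ℝ) + 1) + 1) * (1 / (2 ^ (m + 1) * ((m + 1).factorial : ℝ)) * (x * A)) := by ring
  rw [hsub, k2]
  have hm : (m.factorial : ℝ) ≠ 0 := Nat.cast_ne_zero.mpr (Nat.factorial_ne_zero m)
  push_cast [Nat.factorial_succ]
  field_simp
  ring
end

section
/- Let T > 0, let v, ω : [0, T] → ℝ be continuous, and let z : [0, T] × [−1, 1] → ℝ⁴ be continuous, with continuous partial derivative ∂z/∂t, satisfying the parameterized bilinear ensemble dynamics ∂z/∂t(t, β) = β · (v(t) · B₁ + ω(t) · B₂) · z(t, β) for all t ∈ [0, T] and β ∈ [−1, 1]. For each natural number k define the k-th moment m_k(t) = ∫_{−1}^{1} φ_k(β) · z(t, β) dμ(β) ∈ ℝ⁴, with the convention m_{−1} = 0. Then for every k, m_k is differentiable on (0, T) and satisfies the moment dynamics d/dt m_k(t) = (v(t) · B₁ + ω(t)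 · B₂) · (a_k · m_{k+1}(t) + c_k · m_{k−1}(t)). -/
open Real Matrix MeasureTheory

/-- The normalized Legendre polynomial `φ_k(x) = √(2k + 1) · P_k(x)`. -/
noncomputable def normLegendre (k : ℕ) (x : ℝ) : ℝ :=
  Real.sqrt (2 * (k : ℝ) + 1) * legendre k x

/-- The uniform probability measure on `[−1, 1]`, i.e. `dμ = dx/2`. -/
noncomputable def unifMeasure : Measure ℝ :=
  (2 : ENNReal)⁻¹ • (volume.restrict (Set.Icc (-1 : ℝ) 1))

/-- The coefficient `a_k = (k + 1)/√(4(k + 1)² − 1)` for `k ≥ 0`. -/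
noncomputable def aCoef (k : ℕ) : ℝ :=
  ((k : ℝ) + 1) / Real.sqrt (4 * ((k : ℝ) + 1) ^ 2 - 1)

/-- The coefficient `c_k = k/√(4k² − 1)` for `k ≥ 1`, with `c_0 = 0`. -/
noncomputable def cCoef (k : ℕ) : ℝ :=
  if k = 0 then 0 else (k : ℝ) / Real.sqrt (4 * (k : ℝ) ^ 2 - 1)

/-- `B₁ = [[0, Λ], [0, 0]]` in 2×2 block form, where `Λ = [[0, 1], [1, 0]]`. -/
def B1 : Matrix (Fin 4) (Fin 4) ℝ :=
  !![0, 0, 0, 1;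
     0, 0, 1, 0;
     0, 0, 0, 0;
     0, 0, 0, 0]

/-- `B₂ = [[0, 0], [0, J]]` in 2×2 block form, where `J = [[0, −1], [1, 0]]`. -/
def B2 : Matrix (Fin 4) (Fin 4) ℝ :=
  !![0, 0, 0, 0;
     0, 0, 0, 0;
     0, 0, 0, -1;
     0, 0, 1, 0]

/-- The `k`-th moment `m_k(t) = ∫_{−1}^{1} φ_k(β) · z(t, β) dμ(β) ∈ ℝ⁴` of the ensemble
state, indexed by `ℤ` with the convention `m_k = 0` for `k < 0` (so `m_{−1} = 0`). -/
noncomputable def moment (z : ℝ → ℝ → Fin 4 → ℝ) (k : ℤ) (t : ℝ) : Fin 4 → ℝ :=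
  if k < 0 then 0 else ∫ β, normLegendre k.toNat β • z t β ∂unifMeasure

section MomAux
namespace MomAux
open Polynomial


noncomputable def Q (n : ℕ) : Polynomial ℝ := (X ^ 2 - 1) ^ n

lemma iter_shift (k : ℕ) (p : Polynomial ℝ) :
    derivative^[k] (derivative p) = derivative^[k + 1] p :=
  (Function.iterate_succ_apply derivative k p).symm

lemma cast_shift1 (k : ℕ) (p : Polynomial ℝ) :
    (k : Polynomial ℝ) * derivative^[k - 1] (derivative p)
      = (k : Polynomial ℝ) * derivative^[k] p := by
  cases k with
  | zero => simp
  | succ m => rw [Nat.succ_sub_one, iter_shift]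

lemma iter_deriv_X_mul (k : ℕ) (p : Polynomial ℝ) :
    derivative^[k] (X * p)
      = X * derivative^[k] p + (k : Polynomial ℝ) * derivative^[k - 1] p := by
  induction k generalizing p with
  | zero => simp
  | succ m ih =>
      rw [Function.iterate_succ_apply]
      have h1 : derivative (X * p) = p + X * derivative p := by
        rw [derivative_mul, derivative_X]; ring
      rw [h1, iterate_map_add derivative _ _ _, ih (derivative p), Nat.succ_sub_one]
      rw [cast_shift1, iter_shift]
      push_cast
      ring

lemma cast_pred_mul (k : ℕ) :
    (k : Polynomial ℝ) * ((k - 1 : ℕ) : Polynomial ℝ)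
      = (k : Polynomial ℝ) * ((k : Polynomial ℝ) - 1) := by
  cases k with
  | zero => simp
  | succ m => push_cast [Nat.succ_sub_one]; ring

lemma sub_sub_one (k : ℕ) : k - 1 - 1 = k - 2 := by omega

lemma iter_deriv_sq_mul (k : ℕ) (p : Polynomial ℝ) :
    derivative^[k] ((X ^ 2 - 1) * p)
      = (X ^ 2 - 1) * derivative^[k] p
        + 2 * (k : Polynomial ℝ) * (X * derivative^[k - 1] p)
        + (k : Polynomial ℝ) * ((k : Polynomial ℝ) - 1) * derivative^[k - 2] p := by
  have h0 : (X ^ 2 - 1) * p = X * (X * p) - p := by ring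
  rw [h0, iterate_derivative_sub, iter_deriv_X_mul, iter_deriv_X_mul,
    iter_deriv_X_mul, sub_sub_one]
  have := cast_pred_mul k
  ring_nf
  ring_nf at this
  linear_combination (derivative^[k-2] p) * this


lemma derivQ (n : ℕ) :
    derivative ((X ^ 2 - 1 : Polynomial ℝ) ^ (n + 1))
      = (2 * (n : Polynomial ℝ) + 2) * (X * (X ^ 2 - 1) ^ n) := by
  rw [derivative_pow]
  have h : derivative (X ^ 2 - 1 : Polynomial ℝ) = 2 * X := by
    rw [derivative_sub, derivative_one, derivative_X_pow]
    norm_num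
    rw [show ((2:Polynomial ℝ)) = C ((2:ℕ):ℝ) by rw [C_eq_natCast]; norm_num]
    norm_num
  rw [h, Nat.succ_sub_one, C_eq_natCast]
  push_cast; ring

lemma ode (n : ℕ) :
    (X ^ 2 - 1) * derivative ((X ^ 2 - 1 : Polynomial ℝ) ^ n)
      = 2 * (n : Polynomial ℝ) * (X * (X ^ 2 - 1) ^ n) := by
  cases n with
  | zero => simp
  | succ m => rw [derivQ]; push_cast; ring

lemma iter_deriv_const_mul (c : ℝ) (k : ℕ) (p : Polynomial ℝ) :
    derivative^[k] (C c * p) = C c * derivative^[k] p :=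
  iterate_derivative_C_mul c p k

lemma cast_shift2 (k : ℕ) (p : Polynomial ℝ) :
    (k : Polynomial ℝ) * ((k : Polynomial ℝ) - 1) * derivative^[k - 2] (derivative p)
      = (k : Polynomial ℝ) * ((k : Polynomial ℝ) - 1) * derivative^[k - 1] p := by
  match k with
  | 0 => push_cast; ring
  | 1 => push_cast; ring
  | (m+2) =>
      have h1 : m + 2 - 2 = m := by omega
      have h2 : m + 2 - 1 = m + 1 := by omega
      rw [h1, h2, iter_shift]

/-- R5: differentiated ODE. -/
lemma R5 (n k : ℕ) :
    (X ^ 2 - 1) * derivative^[k + 1] ((X ^ 2 - 1 : Polynomial ℝ) ^ n)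
        + 2 * (k : Polynomial ℝ) * (X * derivative^[k] ((X ^ 2 - 1 : Polynomial ℝ) ^ n))
        + (k : Polynomial ℝ) * ((k : Polynomial ℝ) - 1)
          * derivative^[k - 1] ((X ^ 2 - 1 : Polynomial ℝ) ^ n)
      = 2 * (n : Polynomial ℝ) * (X * derivative^[k] ((X ^ 2 - 1 : Polynomial ℝ) ^ n))
        + 2 * (n : Polynomial ℝ) * (k : Polynomial ℝ)
          * derivative^[k - 1] ((X ^ 2 - 1 : Polynomial ℝ) ^ n) := by
  have h := congrArg (fun p => derivative^[k] p) (ode n)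
  rw [iter_deriv_sq_mul] at h
  have hc : (2 * (n : Polynomial ℝ)) * (X * (X ^ 2 - 1) ^ n)
      = C ((2 * n : ℕ) : ℝ) * (X * (X ^ 2 - 1) ^ n) := by
    rw [C_eq_natCast]; push_cast; ring
  rw [hc, iter_deriv_const_mul, iter_deriv_X_mul, C_eq_natCast] at h
  have s1 := cast_shift1 k ((X ^ 2 - 1 : Polynomial ℝ) ^ n)
  have s2 := cast_shift2 k ((X ^ 2 - 1 : Polynomial ℝ) ^ n)
  rw [iter_shift] at h
  push_cast at h ⊢
  linear_combination h - 2 * X * s1 - s2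

/-- E1: `D^{k+1} Q_{n+1} = (2n+2)(X D^k Q_n + k D^{k-1} Q_n)`. -/
lemma E1 (n k : ℕ) :
    derivative^[k + 1] ((X ^ 2 - 1 : Polynomial ℝ) ^ (n + 1))
      = (2 * (n : Polynomial ℝ) + 2)
          * (X * derivative^[k] ((X ^ 2 - 1 : Polynomial ℝ) ^ n)
            + (k : Polynomial ℝ) * derivative^[k - 1] ((X ^ 2 - 1 : Polynomial ℝ) ^ n)) := by
  rw [← iter_shift, derivQ]
  have hc : (2 * (n : Polynomial ℝ) + 2) * (X * (X ^ 2 - 1) ^ n)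
      = C ((2 * n + 2 : ℕ) : ℝ) * (X * (X ^ 2 - 1) ^ n) := by
    rw [C_eq_natCast]; push_cast; ring
  rw [hc, iter_deriv_const_mul, iter_deriv_X_mul, C_eq_natCast]
  push_cast; ring

lemma C2eq : (C 2 : Polynomial ℝ) = 2 := map_ofNat C 2

lemma derivX2 : derivative (X ^ 2 - 1 : Polynomial ℝ) = 2 * X := by
  have := derivQ 0
  simpa using this

lemma goalP (n : ℕ) :
    derivative^[n + 1] ((X ^ 2 - 1 : Polynomial ℝ) ^ (n + 1))
      = (4 * (n : Polynomial ℝ) + 2) * (X * derivative^[n] ((X ^ 2 - 1 : Polynomial ℝ) ^ n))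
        - 4 * (n : Polynomial ℝ) ^ 2
            * derivative^[n - 1] ((X ^ 2 - 1 : Polynomial ℝ) ^ (n - 1)) := by
  match n with
  | 0 =>
      norm_num
      simp [pow_one, pow_zero, Function.iterate_one, Function.iterate_zero, id_eq, derivX2, C2eq]
  | 1 =>
      have h1 : derivative^[1] ((X ^ 2 - 1 : Polynomial ℝ) ^ 1) = 2 * X := by
        simp [Function.iterate_one, pow_one, derivX2, C2eq]
        norm_num
      have h2 := E1 1 1
      rw [h1] at h2
      rw [h2, h1]
      norm_num
      ring
  | (m + 2) =>
      have h1 := E1 (m + 2) (m + 2)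
      have h2 := E1 (m + 1) (m + 1)
      have h3 := E1 (m + 1) m
      have h4 := R5 (m + 1) m
      have e1 : m + 2 - 1 = m + 1 := rfl
      have e2 : m + 1 - 1 = m := rfl
      rw [e1] at h1
      rw [e2] at h2
      rw [e1, e2] at *
      push_cast at h1 h2 h3 h4 ⊢
      linear_combination h1 - (2 * ((m : Polynomial ℝ) + 2) * X) * h2
        + (2 * ((m : Polynomial ℝ) + 2) * ((m : Polynomial ℝ) + 3)) * h3
        - (4 * ((m : Polynomial ℝ) + 2) ^ 2) * h4



lemma iter_shift' (k : ℕ) (p : Polynomial ℝ) :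
    derivative^[k] (derivative p) = derivative^[k + 1] p :=
  (Function.iterate_succ_apply derivative k p).symm

lemma iteratedDeriv_polyeval (k : ℕ) (p : Polynomial ℝ) :
    iteratedDeriv k (fun y => p.eval y) = fun y => (derivative^[k] p).eval y := by
  induction k generalizing p with
  | zero => simp
  | succ m ih =>
      rw [iteratedDeriv_succ']
      have hd : (deriv fun y => p.eval y) = fun y => (derivative p).eval y := by
        funext y; exact Polynomial.deriv p  -- may need adjusting
      rw [hd, ih (derivative p), iter_shift']

lemma legendre_eq (n : ℕ) (x : ℝ) :
    legendre n x
      = ((2 : ℝ) ^ n * n.factorial)⁻¹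
          * (derivative^[n] ((X ^ 2 - 1 : Polynomial ℝ) ^ n)).eval x := by
  unfold legendre
  rw [one_div]
  congr 1
  have h : (fun y : ℝ => (y ^ 2 - 1) ^ n)
      = fun y => ((X ^ 2 - 1 : Polynomial ℝ) ^ n).eval y := by
    funext y; simp
  rw [h, iteratedDeriv_polyeval]

lemma legendre_rec (n : ℕ) (x : ℝ) :
    ((n : ℝ) + 1) * legendre (n + 1) x
      = (2 * (n : ℝ) + 1) * x * legendre n x - (n : ℝ) * legendre (n - 1) x := by
  have hg := congrArg (Polynomial.eval x) (goalP n)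
  simp only [eval_sub, eval_mul, eval_add, eval_natCast, eval_X, eval_pow, eval_ofNat] at hg
  match n with
  | 0 =>
      simp only [legendre_eq]
      norm_num at hg ⊢
      linear_combination (1 / 2 : ℝ) * hg
  | (m + 1) =>
      simp only [legendre_eq]
      have e2 : m + 1 - 1 = m := rfl
      rw [e2] at hg
      have hfac : ((m + 1 + 1).factorial : ℝ) = ((m : ℝ) + 2) * ((m + 1).factorial : ℝ) := by
        rw [Nat.factorial_succ]; push_cast; ring
      have hfac2 : ((m + 1).factorial : ℝ) = ((m : ℝ) + 1) * (m.factorial : ℝ) := by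
        rw [Nat.factorial_succ]; push_cast; ring
      have h2p : (2 : ℝ) ^ (m + 1 + 1) = 4 * 2 ^ m := by ring
      have h2p' : (2 : ℝ) ^ (m + 1) = 2 * 2 ^ m := by ring
      rw [hfac, hfac2, h2p, h2p']
      have hq : (2 : ℝ) ^ m ≠ 0 := by positivity
      have hgg : (m.factorial : ℝ) ≠ 0 := by positivity
      have h1 : (m : ℝ) + 1 ≠ 0 := by positivity
      have h2 : (m : ℝ) + 2 ≠ 0 := by positivity
      push_cast at hg ⊢
      generalize hE1 : eval x ((derivative^[m + 1 + 1]) ((X ^ 2 - 1 : Polynomial ℝ) ^ (m + 1 + 1))) = e1 at hg ⊢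
      generalize hE2 : eval x ((derivative^[m + 1]) ((X ^ 2 - 1 : Polynomial ℝ) ^ (m + 1))) = e2 at hg ⊢
      generalize hE3 : eval x ((derivative^[m]) ((X ^ 2 - 1 : Polynomial ℝ) ^ m)) = e3 at hg ⊢
      field_simp
      linear_combination (2 * ((m:ℝ)+2)) * hg


lemma normLegendre_rec (k : ℕ) (x : ℝ) :
    x * normLegendre k x
      = aCoef k * normLegendre (k + 1) x + cCoef k * normLegendre (k - 1) x := by
  match k with
  | 0 =>
      have h0 := legendre_rec 0 x
      norm_num at h0
      simp only [normLegendre, aCoef, cCoef]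
      norm_num
      exact h0.symm
  | (m + 1) =>
      have hrec := legendre_rec (m + 1) x
      have e2 : m + 1 - 1 = m := rfl
      rw [e2] at hrec ⊢
      simp only [normLegendre, aCoef, cCoef, if_neg (Nat.succ_ne_zero m)]
      push_cast at hrec ⊢
      set s1 := Real.sqrt (2 * (m : ℝ) + 1) with hs1def
      have hA : Real.sqrt (4 * ((m : ℝ) + 1 + 1) ^ 2 - 1)
          = Real.sqrt (2 * (m : ℝ) + 3) * Real.sqrt (2 * (m : ℝ) + 5) := by
        rw [← Real.sqrt_mul (by positivity)]
        norm_num; ring_nf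
      have hC : Real.sqrt (4 * ((m : ℝ) + 1) ^ 2 - 1)
          = s1 * Real.sqrt (2 * (m : ℝ) + 3) := by
        rw [hs1def, ← Real.sqrt_mul (by positivity)]
        norm_num; ring_nf
      rw [hA, hC]
      set s2 := Real.sqrt (2 * (m : ℝ) + 3) with hs2def
      set s3 := Real.sqrt (2 * (m : ℝ) + 5) with hs3def
      have hs1 : s1 > 0 := Real.sqrt_pos.mpr (by positivity)
      have hs2 : s2 > 0 := Real.sqrt_pos.mpr (by positivity)
      have hs3 : s3 > 0 := Real.sqrt_pos.mpr (by positivity)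
      have hsq2 : s2 ^ 2 = 2 * (m : ℝ) + 3 := Real.sq_sqrt (by positivity)
      have h21 : (2 * ((m : ℝ) + 1) + 1) = 2 * (m : ℝ) + 3 := by ring
      have h22 : (2 * ((m : ℝ) + 1 + 1) + 1) = 2 * (m : ℝ) + 5 := by ring
      rw [h21, h22, ← hs2def, ← hs3def]
      field_simp
      linear_combination (-1) * hrec + (x * legendre (m+1) x) * hsq2


lemma continuous_normLegendre (k : ℕ) : Continuous (normLegendre k) := by
  have h : normLegendre k = fun x =>
      Real.sqrt (2 * (k : ℝ) + 1)
        * (((2 : ℝ) ^ k * k.factorial)⁻¹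
            * (derivative^[k] ((X ^ 2 - 1 : Polynomial ℝ) ^ k)).eval x) := by
    funext x; rw [normLegendre, legendre_eq]
  rw [h]
  exact continuous_const.mul (continuous_const.mul (Polynomial.continuous _))

end MomAux
end MomAux

/-- For a continuous ensemble `z(t, β)` on `[0, T] × [−1, 1]`, with continuous partial
derivative `∂z/∂t` satisfying the bilinear ensemble dynamics
`∂z/∂t(t, β) = β (v(t) B₁ + ω(t) B₂) z(t, β)`, each moment `m_k` is differentiable on
`(0, T)` with `d/dt m_k(t) = (v(t) B₁ + ω(t) B₂)(a_k m_{k+1}(t) + c_k m_{k−1}(t))`. -/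
theorem moment_dynamics (T : ℝ) (hT : 0 < T) (v ω : ℝ → ℝ)
    (hv : ContinuousOn v (Set.Icc 0 T)) (hω : ContinuousOn ω (Set.Icc 0 T))
    (z zt : ℝ → ℝ → Fin 4 → ℝ)
    (hzc : ContinuousOn (fun p : ℝ × ℝ => z p.1 p.2) (Set.Icc 0 T ×ˢ Set.Icc (-1) 1))
    (hztc : ContinuousOn (fun p : ℝ × ℝ => zt p.1 p.2) (Set.Icc 0 T ×ˢ Set.Icc (-1) 1))
    (hderiv : ∀ β ∈ Set.Icc (-1 : ℝ) 1, ∀ t ∈ Set.Icc 0 T,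
      HasDerivWithinAt (fun s => z s β) (zt t β) (Set.Icc 0 T) t)
    (hdyn : ∀ t ∈ Set.Icc 0 T, ∀ β ∈ Set.Icc (-1 : ℝ) 1,
      zt t β = β • (v t • B1 + ω t • B2).mulVec (z t β)) :
    ∀ k : ℕ, ∀ t ∈ Set.Ioo 0 T,
      HasDerivAt (fun s => moment z (k : ℤ) s)
        ((v t • B1 + ω t • B2).mulVec
          (aCoef k • moment z ((k : ℤ) + 1) t + cCoef k • moment z ((k : ℤ) - 1) t)) t := by
  intro k t ht
  have htIcc : t ∈ Set.Icc 0 T := ⟨ht.1.le, ht.2.le⟩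
  obtain ⟨ε, hε, hball⟩ := Metric.isOpen_iff.mp isOpen_Ioo t ht
  set μ := unifMeasure with hμ
  set A := v t • B1 + ω t • B2 with hA
  have hfin : IsFiniteMeasure μ := by
    constructor
    rw [hμ, unifMeasure]
    rw [Measure.smul_apply, Measure.restrict_apply_univ, Real.volume_Icc, smul_eq_mul]
    have h2 : ((1:ℝ) - -1) = 2 := by norm_num
    rw [h2]
    exact ENNReal.mul_lt_top (by simp) ENNReal.ofReal_lt_top
  have hae : ∀ᵐ β ∂μ, β ∈ Set.Icc (-1 : ℝ) 1 := by
    rw [hμ, unifMeasure]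
    exact Measure.ae_smul_measure (ae_restrict_mem measurableSet_Icc) _
  have hmeash : ∀ g : ℝ → Fin 4 → ℝ, ContinuousOn g (Set.Icc (-1:ℝ) 1) →
      AEStronglyMeasurable g μ := fun g hg =>
    (hg.aestronglyMeasurable measurableSet_Icc).smul_measure _
  have hinth : ∀ g : ℝ → Fin 4 → ℝ, ContinuousOn g (Set.Icc (-1:ℝ) 1) →
      Integrable g μ := fun g hg =>
    (hg.integrableOn_compact isCompact_Icc).smul_measure (by norm_num)
  have hzcont : ∀ s ∈ Set.Icc (0:ℝ) T, ContinuousOn (fun β => z s β) (Set.Icc (-1:ℝ) 1) := by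
    intro s hs
    exact hzc.comp ((continuous_const.prodMk continuous_id).continuousOn)
      (fun β hβ => ⟨hs, hβ⟩)
  have hztcont : ∀ s ∈ Set.Icc (0:ℝ) T, ContinuousOn (fun β => zt s β) (Set.Icc (-1:ℝ) 1) := by
    intro s hs
    exact hztc.comp ((continuous_const.prodMk continuous_id).continuousOn)
      (fun β hβ => ⟨hs, hβ⟩)
  obtain ⟨M, hM⟩ := (isCompact_Icc.prod isCompact_Icc).exists_bound_of_continuousOn hztc
  obtain ⟨C, hC0⟩ := (isCompact_Icc : IsCompact (Set.Icc (-1:ℝ) 1)).exists_bound_of_continuousOn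
    ((MomAux.continuous_normLegendre k).continuousOn)
  have hCpos : 0 ≤ C :=
    le_trans (norm_nonneg (normLegendre k 0)) (hC0 0 (by norm_num))
  have key := hasDerivAt_integral_of_dominated_loc_of_deriv_le (μ := μ)
      (F := fun s β => normLegendre k β • z s β)
      (F' := fun s β => normLegendre k β • zt s β)
      (bound := fun _ => C * M) (x₀ := t) (Metric.ball_mem_nhds t hε)
      (by
        filter_upwards [isOpen_Ioo.mem_nhds ht] with s hs
        exact hmeash _ (((MomAux.continuous_normLegendre k).continuousOn).smul
          (hzcont s ⟨hs.1.le, hs.2.le⟩)))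
      (hinth _ (((MomAux.continuous_normLegendre k).continuousOn).smul (hzcont t htIcc)))
      (hmeash _ (((MomAux.continuous_normLegendre k).continuousOn).smul (hztcont t htIcc)))
      (by
        filter_upwards [hae] with β hβ
        intro s hs
        have hsI := hball hs
        rw [norm_smul]
        exact mul_le_mul (hC0 β hβ) (hM (s, β) ⟨⟨hsI.1.le, hsI.2.le⟩, hβ⟩)
          (norm_nonneg _) hCpos)
      (integrable_const _)
      (by
        filter_upwards [hae] with β hβ
        intro s hs
        have hsI := hball hs
        exact ((hderiv β hβ s ⟨hsI.1.le, hsI.2.le⟩).hasDerivAt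
          (Icc_mem_nhds hsI.1 hsI.2)).const_smul (normLegendre k β))
  have hfun : (fun s => moment z (k:ℤ) s)
      = fun s => ∫ β, normLegendre k β • z s β ∂μ := by
    funext s
    rw [moment, if_neg (by omega), Int.toNat_natCast]
  rw [hfun]
  -- now compute the value of the derivative
  let L : (Fin 4 → ℝ) →L[ℝ] (Fin 4 → ℝ) := LinearMap.toContinuousLinearMap A.mulVecLin
  have hL : ∀ w, L w = A.mulVec w := fun w => rfl
  have hg1 : Integrable (fun β => normLegendre (k+1) β • z t β) μ :=
    hinth _ (((MomAux.continuous_normLegendre (k+1)).continuousOn).smul (hzcont t htIcc))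
  have hg2 : Integrable (fun β => normLegendre (k-1) β • z t β) μ :=
    hinth _ (((MomAux.continuous_normLegendre (k-1)).continuousOn).smul (hzcont t htIcc))
  have e1 : (∫ β, normLegendre k β • zt t β ∂μ)
      = ∫ β, (aCoef k • L (normLegendre (k+1) β • z t β)
          + cCoef k • L (normLegendre (k-1) β • z t β)) ∂μ := by
    refine integral_congr_ae ?_
    filter_upwards [hae] with β hβ
    rw [hdyn t htIcc β hβ]
    simp only [L.map_smul, hL]
    rw [smul_smul, smul_smul, smul_smul, ← add_smul]
    congr 1
    linear_combination MomAux.normLegendre_rec k β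
  have hm1 : moment z ((k:ℤ)+1) t = ∫ β, normLegendre (k+1) β • z t β ∂μ := by
    rw [moment, if_neg (by omega)]
    rw [show ((k:ℤ)+1).toNat = k+1 by omega]
  have hm2 : cCoef k • moment z ((k:ℤ)-1) t
      = cCoef k • ∫ β, normLegendre (k-1) β • z t β ∂μ := by
    cases k with
    | zero =>
        simp [cCoef]
    | succ m =>
        rw [moment, if_neg (by omega)]
        rw [show (((m+1:ℕ):ℤ)-1).toNat = (m+1) - 1 by omega]
  have e2 : (∫ β, (aCoef k • L (normLegendre (k+1) β • z t β)
          + cCoef k • L (normLegendre (k-1) β • z t β)) ∂μ)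
      = A.mulVec (aCoef k • moment z ((k:ℤ)+1) t + cCoef k • moment z ((k:ℤ)-1) t) := by
    have hi1 : Integrable (fun β => aCoef k • L (normLegendre (k+1) β • z t β)) μ :=
      (L.integrable_comp hg1).smul (aCoef k)
    have hi2 : Integrable (fun β => cCoef k • L (normLegendre (k-1) β • z t β)) μ :=
      (L.integrable_comp hg2).smul (cCoef k)
    rw [integral_add hi1 hi2,
      integral_smul, integral_smul, L.integral_comp_comm hg1, L.integral_comp_comm hg2,
      hm1, hm2, ← hL, _root_.map_add, L.map_smul, L.map_smul]
  rw [← e2, ← e1]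
  exact key.2
end

section
/- Let x ∈ ℝⁿ, let a_1, …, a_d ∈ ℝⁿ, b_1, …, b_d ∈ ℝ, and let M ≥ 0 be a real number such that for every i, a_iᵀ x − b_i ≤ M and a_iᵀ x ≥ −M. Then x lies in the union of the half-spaces {y : a_iᵀ y ≤ b_i} (i.e., there exists some i with a_iᵀ x ≤ b_i) if and only if there exist z_1, …, z_d ∈ {0, 1} with z_1 + ⋯ + z_d ≥ 1 such that for every i, −M ≤ a_iᵀ x + M · z_i ≤ b_i + M. -/
/-- Big-M reformulation of the disjunctive safe-set (obstacle-avoidance) constraint: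
assuming `aᵢᵀx − bᵢ ≤ M` and `aᵢᵀx ≥ −M` for all `i`, the point `x` lies in the union
of the half-spaces `{y : aᵢᵀ y ≤ bᵢ}` if and only if there exist binary variables
`zᵢ ∈ {0, 1}` with `∑ zᵢ ≥ 1` such that `−M ≤ aᵢᵀx + M zᵢ ≤ bᵢ + M` for every `i`. -/
theorem bigM_disjunctive_reformulation (n d : ℕ) (x : Fin n → ℝ)
    (a : Fin d → Fin n → ℝ) (b : Fin d → ℝ) (M : ℝ) (hM : 0 ≤ M)
    (h1 : ∀ i, (∑ j, a i j * x j) - b i ≤ M)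
    (h2 : ∀ i, -M ≤ ∑ j, a i j * x j) :
    (∃ i, ∑ j, a i j * x j ≤ b i) ↔
      ∃ z : Fin d → ℝ, (∀ i, z i = 0 ∨ z i = 1) ∧ 1 ≤ ∑ i, z i ∧
        ∀ i, -M ≤ (∑ j, a i j * x j) + M * z i ∧
          (∑ j, a i j * x j) + M * z i ≤ b i + M := by

  constructor
  · rintro ⟨i₀, hi₀⟩
    refine ⟨fun i => if i = i₀ then 1 else 0, fun i => by by_cases h : i = i₀ <;> simp [h], ?_, ?_⟩
    · rw [Finset.sum_ite_eq' Finset.univ i₀ (fun _ => (1:ℝ))]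
      simp
    · intro i
      by_cases h : i = i₀
      · subst h
        simp only [if_pos rfl, if_true, mul_one]
        exact ⟨by linarith [h2 i], by linarith⟩
      · simp only [if_neg h, mul_zero, add_zero]
        exact ⟨h2 i, by linarith [h1 i]⟩
  · rintro ⟨z, hz01, hzsum, hz⟩
    by_contra hc
    push_neg at hc
    have : ∀ i, z i = 0 := by
      intro i
      rcases hz01 i with h | h
      · exact h
      · exfalso
        have := (hz i).2
        rw [h, mul_one] at this
        exact absurd (by linarith) (not_le.mpr (hc i))
    simp [this] at hzsum
    linarith
end

section
/- Let (Ω, μ) be a measure space with μ a finite measure, let φ : Ω → ℝ be bounded and measurable, let x : Ω → ℝⁿ be integrable, let a ∈ ℝⁿ, b ∈ ℝ, M ≥ 0, and let z ∈ {0, 1} be fixed. If for μ-almost every β ∈ Ω one has −M ≤ aᵀ x(β) + M · z ≤ b + M, then the scalar moment aᵀ ∫_Ω φ(β) · x(β) dμ(β) satisfies (−M − M·z) · m⁺ − (b + M − M·z) · m⁻ ≤ aᵀ ∫_Ω φ(β) · x(β) dμ(β) ≤ (b + M − M·z) · m⁺ + (M + M·z) · m⁻. -/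
open MeasureTheory

/-- Moment-space representation of a single big-M obstacle-avoidance constraint with
binary variable `z`: if `−M ≤ aᵀx(β) + M z ≤ b + M` holds μ-almost everywhere, then
`(−M − Mz) m⁺ − (b + M − Mz) m⁻ ≤ aᵀ ∫ φ(β) x(β) dμ ≤ (b + M − Mz) m⁺ + (M + Mz) m⁻`,
where `m⁺ = ∫ φ⁺ dμ` and `m⁻ = ∫ φ⁻ dμ` are the integrals of the positive and negative
parts of `φ`. -/
theorem bigM_moment_kernelization
    {Ω : Type*} [MeasurableSpace Ω] (μ : Measure Ω) [IsFiniteMeasure μ]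
    (φ : Ω → ℝ) (hφm : Measurable φ) (C : ℝ) (hφb : ∀ β, |φ β| ≤ C)
    (n : ℕ) (x : Ω → Fin n → ℝ) (hx : Integrable x μ)
    (a : Fin n → ℝ) (b M z : ℝ) (hM : 0 ≤ M) (hz : z = 0 ∨ z = 1)
    (hcon : ∀ᵐ β ∂μ, -M ≤ (∑ j, a j * x β j) + M * z ∧
      (∑ j, a j * x β j) + M * z ≤ b + M) :
    (-M - M * z) * (∫ β, max (φ β) 0 ∂μ)
        - (b + M - M * z) * (∫ β, max (-φ β) 0 ∂μ)
      ≤ (∑ j, a j * (∫ β, φ β • x β ∂μ) j) ∧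
    (∑ j, a j * (∫ β, φ β • x β ∂μ) j)
      ≤ (b + M - M * z) * (∫ β, max (φ β) 0 ∂μ)
        + (M + M * z) * (∫ β, max (-φ β) 0 ∂μ) := by
  have hφtop : MemLp φ ⊤ μ :=
    memLp_top_of_bound hφm.aestronglyMeasurable C (ae_of_all _ fun β => by
      simpa using hφb β)
  have hφi : Integrable φ μ :=
    (integrable_const C).mono' hφm.aestronglyMeasurable
      (ae_of_all _ fun β => by simpa using hφb β)
  have hφpi : Integrable (fun β => max (φ β) 0) μ := hφi.pos_part
  have hφni : Integrable (fun β => max (-φ β) 0) μ := hφi.neg.pos_part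
  have hxc : ∀ j : Fin n, Integrable (fun β => x β j) μ := fun j =>
    (ContinuousLinearMap.proj (R := ℝ) (φ := fun _ : Fin n => ℝ) j).integrable_comp hx
  set g : Ω → ℝ := fun β => ∑ j, a j * x β j with hg
  have hgi : Integrable g μ :=
    integrable_finset_sum _ fun j _ => (hxc j).const_mul (a j)
  have hφxi : Integrable (fun β => φ β • x β) μ := hx.smul_of_top_right hφtop
  have hφgi : Integrable (fun β => φ β * g β) μ := hgi.smul_of_top_right hφtop
  have key : (∑ j, a j * (∫ β, φ β • x β ∂μ) j) = ∫ β, φ β * g β ∂μ := by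
    have h1 : ∀ j : Fin n, (∫ β, φ β • x β ∂μ) j = ∫ β, φ β * x β j ∂μ := fun j => by
      have := (ContinuousLinearMap.proj (R := ℝ) (φ := fun _ : Fin n => ℝ) j).integral_comp_comm
        hφxi
      simpa [smul_eq_mul] using this.symm
    simp only [h1]
    rw [Finset.sum_congr rfl fun j _ => (integral_const_mul (a j) _).symm,
      ← integral_finset_sum]
    · congr 1; funext β
      rw [hg]; rw [Finset.mul_sum]
      exact Finset.sum_congr rfl fun i _ => by ring
    · exact fun j _ => ((hxc j).smul_of_top_right hφtop).const_mul (a j)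
  have hgb : ∀ᵐ β ∂μ, (-M - M * z) ≤ g β ∧ g β ≤ b + M - M * z := by
    filter_upwards [hcon] with β hβ
    constructor
    · linarith [hβ.1]
    · linarith [hβ.2]
  constructor
  · rw [key, ← integral_const_mul, ← integral_const_mul, ← integral_sub
      (hφpi.const_mul _) (hφni.const_mul _)]
    refine integral_mono_ae ((hφpi.const_mul _).sub (hφni.const_mul _)) hφgi ?_
    filter_upwards [hgb] with β hβ
    have hd : φ β = max (φ β) 0 - max (-φ β) 0 := by
      rcases le_total (φ β) 0 with h | h
      · rw [max_eq_right h, max_eq_left (neg_nonneg.mpr h)]; ring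
      · rw [max_eq_left h, max_eq_right (neg_nonpos.mpr h)]; ring
    have heq : φ β * g β = max (φ β) 0 * g β - max (-φ β) 0 * g β := by
      linear_combination g β * hd
    have hp : 0 ≤ max (φ β) 0 := le_max_right _ _
    have hn : 0 ≤ max (-φ β) 0 := le_max_right _ _
    nlinarith [mul_le_mul_of_nonneg_left hβ.1 hp, mul_le_mul_of_nonneg_left hβ.2 hn]
  · rw [key, ← integral_const_mul, ← integral_const_mul, ← integral_add
      (hφpi.const_mul _) (hφni.const_mul _)]
    refine integral_mono_ae hφgi ((hφpi.const_mul _).add (hφni.const_mul _)) ?_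
    filter_upwards [hgb] with β hβ
    have hd : φ β = max (φ β) 0 - max (-φ β) 0 := by
      rcases le_total (φ β) 0 with h | h
      · rw [max_eq_right h, max_eq_left (neg_nonneg.mpr h)]; ring
      · rw [max_eq_left h, max_eq_right (neg_nonpos.mpr h)]; ring
    have heq : φ β * g β = max (φ β) 0 * g β - max (-φ β) 0 * g β := by
      linear_combination g β * hd
    have hp : 0 ≤ max (φ β) 0 := le_max_right _ _
    have hn : 0 ≤ max (-φ β) 0 := le_max_right _ _
    nlinarith [mul_le_mul_of_nonneg_left hβ.2 hp, mul_le_mul_of_nonneg_left hβ.1 hn]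
end
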